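/- arXiv:2104.10459 — 2 statements merged into one kernel-verified Lean document; each statement's English description precedes it below -/
import Mathlib

section
/- For real matrices A ∈ ℝ^{m×n} (von Neumann trace inequality): trace(Aᵀ B) ≤ Σᵢ σᵢ(A)·σᵢ(B), where σ₁ ≥ σ₂ ≥ ... are the singular values of A and B in descending order. -/
open Matrix BigOperators

/-- The rectangular diagonal matrix with diagonal entries `σ 0, σ 1, ...`. -/
def rectDiag (m n : ℕ) (σ : ℕ → ℝ) : Matrix (Fin m) (Fin n) ℝ :=
  fun i j => if (i : ℕ) = (j : ℕ) then σ i else 0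

lemma rectDiag_contract {m n : ℕ} (σ : ℕ → ℝ) (f : Fin m → Fin n → ℝ) (g : ℕ → ℝ)
    (hg : ∀ (l : Fin m) (j : Fin n), (l:ℕ) = (j:ℕ) → f l j = g l) :
    ∑ l : Fin m, ∑ j : Fin n, rectDiag m n σ l j * f l j
      = ∑ s ∈ Finset.range (min m n), σ s * g s := by
  have h1 : ∀ l : Fin m, ∑ j : Fin n, rectDiag m n σ l j * f l j
      = (fun s : ℕ => if s < n then σ s * g s else 0) (l : ℕ) := by
    intro l
    have step : ∀ j : Fin n, rectDiag m n σ l j * f l j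
        = (fun t : ℕ => if (l:ℕ) = t then σ l * g l else 0) (j : ℕ) := by
      intro j
      simp only [rectDiag]
      by_cases h : (l:ℕ) = (j:ℕ)
      · simp [h, hg l j h]
      · simp [h]
    rw [Finset.sum_congr rfl (fun j _ => step j),
      Fin.sum_univ_eq_sum_range (fun t => if (l:ℕ) = t then σ l * g l else 0) n,
      Finset.sum_ite_eq]
    simp
  rw [Finset.sum_congr rfl (fun l _ => h1 l),
    Fin.sum_univ_eq_sum_range (fun s => if s < n then σ s * g s else 0) m,
    Finset.sum_ite, Finset.sum_const_zero, add_zero]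
  congr 1
  ext t
  simp [Nat.lt_min, and_comm]

lemma trace_transpose_mul' {m n : ℕ} (D M : Matrix (Fin m) (Fin n) ℝ) :
    (Dᵀ * M).trace = ∑ l : Fin m, ∑ j : Fin n, D l j * M l j := by
  rw [Matrix.trace]
  simp only [Matrix.diag, Matrix.mul_apply, Matrix.transpose_apply]
  exact Finset.sum_comm

lemma triple_entry {m n : ℕ} (U : Matrix (Fin m) (Fin m) ℝ) (E : Matrix (Fin m) (Fin n) ℝ)
    (V : Matrix (Fin n) (Fin n) ℝ) (l : Fin m) (j : Fin n) :
    (U * E * Vᵀ) l j = ∑ i : Fin m, ∑ k : Fin n, E i k * (U l i * V j k) := by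
  rw [Matrix.mul_assoc]
  simp only [Matrix.mul_apply, Matrix.transpose_apply, Finset.mul_sum]
  apply Finset.sum_congr rfl
  intro i _
  apply Finset.sum_congr rfl
  intro k _
  ring

lemma cs_sum {ι : Type*} (s : Finset ι) (f g : ι → ℝ) :
    ∑ i ∈ s, f i * g i ≤ Real.sqrt (∑ i ∈ s, f i ^ 2) * Real.sqrt (∑ i ∈ s, g i ^ 2) := by
  have h := Finset.sum_mul_sq_le_sq_mul_sq s f g
  calc ∑ i ∈ s, f i * g i ≤ |∑ i ∈ s, f i * g i| := le_abs_self _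
    _ = Real.sqrt ((∑ i ∈ s, f i * g i) ^ 2) := (Real.sqrt_sq_eq_abs _).symm
    _ ≤ Real.sqrt ((∑ i ∈ s, f i ^ 2) * ∑ i ∈ s, g i ^ 2) := Real.sqrt_le_sqrt h
    _ = _ := Real.sqrt_mul (Finset.sum_nonneg fun i _ => sq_nonneg _) _

lemma block_sum_le {a b : ℕ} (u v : ℕ → ℕ → ℝ)
    (hur : ∀ j < a, ∑ i ∈ Finset.range b, u j i ^ 2 ≤ 1)
    (huc : ∀ i < b, ∑ j ∈ Finset.range a, u j i ^ 2 ≤ 1)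
    (hvr : ∀ j < a, ∑ i ∈ Finset.range b, v j i ^ 2 ≤ 1)
    (hvc : ∀ i < b, ∑ j ∈ Finset.range a, v j i ^ 2 ≤ 1) :
    ∑ j ∈ Finset.range a, ∑ i ∈ Finset.range b, u j i * v j i ≤ ((min a b : ℕ) : ℝ) := by
  have hbound : ∀ (w : ℕ → ℕ → ℝ), (∀ j < a, ∑ i ∈ Finset.range b, w j i ^ 2 ≤ 1) →
      (∀ i < b, ∑ j ∈ Finset.range a, w j i ^ 2 ≤ 1) →
      ∑ j ∈ Finset.range a, ∑ i ∈ Finset.range b, w j i ^ 2 ≤ ((min a b : ℕ) : ℝ) := by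
    intro w hr hc
    have h1 : ∑ j ∈ Finset.range a, ∑ i ∈ Finset.range b, w j i ^ 2 ≤ (a : ℝ) := by
      calc _ ≤ ∑ j ∈ Finset.range a, (1:ℝ) :=
            Finset.sum_le_sum fun j hj => hr j (Finset.mem_range.mp hj)
        _ = a := by simp
    have h2 : ∑ j ∈ Finset.range a, ∑ i ∈ Finset.range b, w j i ^ 2 ≤ (b : ℝ) := by
      rw [Finset.sum_comm]
      calc _ ≤ ∑ i ∈ Finset.range b, (1:ℝ) :=
            Finset.sum_le_sum fun i hi => hc i (Finset.mem_range.mp hi)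
        _ = b := by simp
    rw [Nat.cast_min]
    exact le_min h1 h2
  have hnn : (0:ℝ) ≤ ((min a b : ℕ) : ℝ) := by positivity
  calc ∑ j ∈ Finset.range a, ∑ i ∈ Finset.range b, u j i * v j i
      ≤ ∑ j ∈ Finset.range a,
          Real.sqrt (∑ i ∈ Finset.range b, u j i ^ 2) *
          Real.sqrt (∑ i ∈ Finset.range b, v j i ^ 2) :=
        Finset.sum_le_sum fun j _ => cs_sum _ _ _
    _ ≤ Real.sqrt (∑ j ∈ Finset.range a, Real.sqrt (∑ i ∈ Finset.range b, u j i ^ 2) ^ 2) *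
        Real.sqrt (∑ j ∈ Finset.range a, Real.sqrt (∑ i ∈ Finset.range b, v j i ^ 2) ^ 2) :=
        cs_sum _ _ _
    _ = Real.sqrt (∑ j ∈ Finset.range a, ∑ i ∈ Finset.range b, u j i ^ 2) *
        Real.sqrt (∑ j ∈ Finset.range a, ∑ i ∈ Finset.range b, v j i ^ 2) := by
        congr 1 <;> · congr 1; exact Finset.sum_congr rfl fun j _ =>
          Real.sq_sqrt (Finset.sum_nonneg fun i _ => sq_nonneg _)
    _ ≤ Real.sqrt (((min a b : ℕ) : ℝ)) * Real.sqrt (((min a b : ℕ) : ℝ)) := by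
        gcongr <;> exact hbound _ ‹_› ‹_›
    _ = ((min a b : ℕ) : ℝ) := Real.mul_self_sqrt hnn

lemma ortho_row_bound {m : ℕ} (U : Matrix (Fin m) (Fin m) ℝ) (h2 : U * Uᵀ = 1)
    (u : ℕ → ℕ → ℝ) (hu : ∀ (s t : ℕ) (hs : s < m) (ht : t < m), u s t = U ⟨s,hs⟩ ⟨t,ht⟩)
    (j : ℕ) (hj : j < m) (b : ℕ) (hb : b ≤ m) :
    ∑ i ∈ Finset.range b, u j i ^ 2 ≤ 1 := by
  have hfull : ∑ i ∈ Finset.range m, u j i ^ 2 = 1 := by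
    have h1 : (U * Uᵀ) ⟨j,hj⟩ ⟨j,hj⟩ = 1 := by rw [h2]; simp [Matrix.one_apply]
    rw [Matrix.mul_apply] at h1
    rw [← h1, ← Fin.sum_univ_eq_sum_range (fun i => u j i ^ 2) m]
    apply Finset.sum_congr rfl
    intro i _
    have he : (⟨(i:ℕ), i.isLt⟩ : Fin m) = i := Fin.eta _ _
    rw [hu j i hj i.isLt, Matrix.transpose_apply, pow_two, he]
  calc ∑ i ∈ Finset.range b, u j i ^ 2 ≤ ∑ i ∈ Finset.range m, u j i ^ 2 :=
      Finset.sum_le_sum_of_subset_of_nonneg (Finset.range_subset_range.mpr hb)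
        (fun _ _ _ => sq_nonneg _)
    _ = 1 := hfull

lemma swap_Icc {N a : ℕ} (F : ℕ → ℕ → ℝ) :
    ∑ j ∈ Finset.range a, ∑ p ∈ Finset.Icc j N, F j p
      = ∑ p ∈ Finset.range (N+1), ∑ j ∈ Finset.range (min a (p+1)), F j p := by
  apply Finset.sum_comm'
  intro j p
  simp only [Finset.mem_range, Finset.mem_Icc, Nat.lt_min]
  omega

lemma abstract_vn (N : ℕ) (σA σB : ℕ → ℝ) (w : ℕ → ℕ → ℝ)
    (hA0 : ∀ i, 0 ≤ σA i) (hB0 : ∀ i, 0 ≤ σB i)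
    (hAd : ∀ i j, i ≤ j → σA j ≤ σA i) (hBd : ∀ i j, i ≤ j → σB j ≤ σB i)
    (hS : ∀ a b, a ≤ N → b ≤ N →
      ∑ j ∈ Finset.range a, ∑ i ∈ Finset.range b, w j i ≤ ((min a b : ℕ) : ℝ)) :
    ∑ j ∈ Finset.range N, ∑ i ∈ Finset.range N, σA j * σB i * w j i
      ≤ ∑ i ∈ Finset.range N, σA i * σB i := by
  set c : ℕ → ℝ := fun p => if p < N then σA p - σA (p+1) else σA N with hcdef
  set d : ℕ → ℝ := fun q => if q < N then σB q - σB (q+1) else σB N with hddef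
  have hc0 : ∀ p, 0 ≤ c p := by
    intro p; simp only [hcdef]
    split
    · have := hAd p (p+1) (by omega); linarith
    · exact hA0 N
  have hd0 : ∀ q, 0 ≤ d q := by
    intro q; simp only [hddef]
    split
    · have := hBd q (q+1) (by omega); linarith
    · exact hB0 N
  have hrec : ∀ (σ : ℕ → ℝ) (cc : ℕ → ℝ),
      (cc = fun p => if p < N then σ p - σ (p+1) else σ N) →
      ∀ j, j ≤ N → σ j = ∑ p ∈ Finset.Icc j N, cc p := by
    intro σ cc hcc j hj
    have hI : Finset.Icc j N = Finset.Ico j (N+1) := by rw [Finset.Ico_add_one_right_eq_Icc]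
    rw [hI, Finset.sum_Ico_succ_top hj]
    have h1 : ∑ p ∈ Finset.Ico j N, cc p
        = ∑ p ∈ Finset.Ico j N, (σ p - σ (p+1)) := by
      apply Finset.sum_congr rfl
      intro p hp
      rw [hcc]
      simp only
      rw [if_pos (Finset.mem_Ico.mp hp).2]
    have h2 : cc N = σ N := by rw [hcc]; simp
    rw [h1, h2, Finset.sum_Ico_eq_sub _ hj, Finset.sum_range_sub' σ, Finset.sum_range_sub' σ]
    ring
  have hrecA : ∀ j, j ≤ N → σA j = ∑ p ∈ Finset.Icc j N, c p := hrec σA c hcdef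
  have hrecB : ∀ j, j ≤ N → σB j = ∑ q ∈ Finset.Icc j N, d q := hrec σB d hddef
  have lhs_eq : ∑ j ∈ Finset.range N, ∑ i ∈ Finset.range N, σA j * σB i * w j i
      = ∑ p ∈ Finset.range (N+1), ∑ q ∈ Finset.range (N+1),
          c p * d q * ∑ j ∈ Finset.range (min N (p+1)), ∑ i ∈ Finset.range (min N (q+1)), w j i := by
    have e1 : ∑ j ∈ Finset.range N, ∑ i ∈ Finset.range N, σA j * σB i * w j i
        = ∑ j ∈ Finset.range N, ∑ p ∈ Finset.Icc j N,
            ∑ i ∈ Finset.range N, ∑ q ∈ Finset.Icc i N, c p * d q * w j i := by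
      apply Finset.sum_congr rfl
      intro j hj
      rw [← Finset.sum_comm]
      apply Finset.sum_congr rfl
      intro i hi
      rw [hrecA j (Finset.mem_range.mp hj).le, hrecB i (Finset.mem_range.mp hi).le,
        Finset.sum_mul_sum, Finset.sum_mul]
      apply Finset.sum_congr rfl
      intro p _
      rw [Finset.sum_mul]
    rw [e1, swap_Icc (fun j p => ∑ i ∈ Finset.range N, ∑ q ∈ Finset.Icc i N, c p * d q * w j i)]
    apply Finset.sum_congr rfl
    intro p _
    rw [Finset.sum_comm]
    have e2 : ∀ i, ∑ j ∈ Finset.range (min N (p+1)), ∑ q ∈ Finset.Icc i N, c p * d q * w j i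
        = ∑ q ∈ Finset.Icc i N, ∑ j ∈ Finset.range (min N (p+1)), c p * d q * w j i :=
      fun i => Finset.sum_comm
    rw [Finset.sum_congr rfl (fun i _ => e2 i),
      swap_Icc (fun i q => ∑ j ∈ Finset.range (min N (p+1)), c p * d q * w j i)]
    apply Finset.sum_congr rfl
    intro q _
    rw [Finset.mul_sum, Finset.sum_comm]
    apply Finset.sum_congr rfl
    intro j _
    rw [Finset.mul_sum]
  have rhs_eq : ∑ i ∈ Finset.range N, σA i * σB i
      = ∑ p ∈ Finset.range (N+1), ∑ q ∈ Finset.range (N+1),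
          c p * d q * ((min (min N (p+1)) (q+1) : ℕ) : ℝ) := by
    have e1 : ∑ i ∈ Finset.range N, σA i * σB i
        = ∑ i ∈ Finset.range N, ∑ p ∈ Finset.Icc i N, ∑ q ∈ Finset.Icc i N, c p * d q := by
      apply Finset.sum_congr rfl
      intro i hi
      rw [hrecA i (Finset.mem_range.mp hi).le, hrecB i (Finset.mem_range.mp hi).le,
        Finset.sum_mul_sum]
    rw [e1, swap_Icc (fun i p => ∑ q ∈ Finset.Icc i N, c p * d q)]
    apply Finset.sum_congr rfl
    intro p _
    rw [swap_Icc (fun i q => c p * d q)]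
    apply Finset.sum_congr rfl
    intro q _
    rw [Finset.sum_const, Finset.card_range, nsmul_eq_mul, mul_comm]
  rw [lhs_eq, rhs_eq]
  apply Finset.sum_le_sum
  intro p _
  apply Finset.sum_le_sum
  intro q _
  have hmin : min (min N (p+1)) (min N (q+1)) = min (min N (p+1)) (q+1) := by omega
  have hSle := hS (min N (p+1)) (min N (q+1)) (min_le_left _ _) (min_le_left _ _)
  rw [hmin] at hSle
  exact mul_le_mul_of_nonneg_left hSle (mul_nonneg (hc0 p) (hd0 q))

/-- Von Neumann trace inequality: given singular value decompositions of `A` and `B`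
with singular values in descending order, `trace(Aᵀ B) ≤ ∑ i, σᵢ(A) σᵢ(B)`. -/
theorem von_neumann_trace_inequality {m n : ℕ}
    (A B : Matrix (Fin m) (Fin n) ℝ)
    (UA UB : Matrix (Fin m) (Fin m) ℝ) (VA VB : Matrix (Fin n) (Fin n) ℝ)
    (hUA : UAᵀ * UA = 1) (hUB : UBᵀ * UB = 1)
    (hVA : VAᵀ * VA = 1) (hVB : VBᵀ * VB = 1)
    (σA σB : ℕ → ℝ)
    (hσA0 : ∀ i, 0 ≤ σA i) (hσB0 : ∀ i, 0 ≤ σB i)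
    (hσAdec : ∀ i j, i ≤ j → σA j ≤ σA i) (hσBdec : ∀ i j, i ≤ j → σB j ≤ σB i)
    (hA : A = UA * rectDiag m n σA * VAᵀ) (hB : B = UB * rectDiag m n σB * VBᵀ) :
    (Aᵀ * B).trace ≤ ∑ i ∈ Finset.range (min m n), σA i * σB i := by
  set N := min m n with hN
  set U : Matrix (Fin m) (Fin m) ℝ := UAᵀ * UB with hU
  set V : Matrix (Fin n) (Fin n) ℝ := VAᵀ * VB with hV
  set u : ℕ → ℕ → ℝ := fun s t => if h : s < m ∧ t < m then U ⟨s,h.1⟩ ⟨t,h.2⟩ else 0 with hu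
  set v : ℕ → ℕ → ℝ := fun s t => if h : s < n ∧ t < n then V ⟨s,h.1⟩ ⟨t,h.2⟩ else 0 with hv
  -- orthogonality of U and V
  have hUAr : UA * UAᵀ = 1 := mul_eq_one_comm.mp hUA
  have hVAr : VA * VAᵀ = 1 := mul_eq_one_comm.mp hVA
  have hU1 : Uᵀ * U = 1 := by
    have : Uᵀ * U = UBᵀ * ((UA * UAᵀ) * UB) := by
      rw [hU]
      simp only [Matrix.transpose_mul, Matrix.transpose_transpose, Matrix.mul_assoc]
    rw [this, hUAr, Matrix.one_mul, hUB]
  have hV1 : Vᵀ * V = 1 := by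
    have : Vᵀ * V = VBᵀ * ((VA * VAᵀ) * VB) := by
      rw [hV]
      simp only [Matrix.transpose_mul, Matrix.transpose_transpose, Matrix.mul_assoc]
    rw [this, hVAr, Matrix.one_mul, hVB]
  have hU2 : U * Uᵀ = 1 := mul_eq_one_comm.mp hU1
  have hV2 : V * Vᵀ = 1 := mul_eq_one_comm.mp hV1
  -- the trace identity
  have trace_eq : (Aᵀ * B).trace
      = ∑ s ∈ Finset.range N, σA s * ∑ t ∈ Finset.range N, σB t * (u s t * v s t) := by
    have e0 : Aᵀ * B = VA * ((rectDiag m n σA)ᵀ * (U * rectDiag m n σB * VBᵀ)) := by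
      rw [hA, hB, hU]
      simp only [Matrix.transpose_mul, Matrix.transpose_transpose, Matrix.mul_assoc]
    have e1 : (Aᵀ * B).trace = ((rectDiag m n σA)ᵀ * (U * rectDiag m n σB * Vᵀ)).trace := by
      rw [e0, Matrix.trace_mul_comm]
      congr 1
      rw [hV]
      simp only [Matrix.transpose_mul, Matrix.transpose_transpose, Matrix.mul_assoc]
    rw [e1, trace_transpose_mul']
    apply rectDiag_contract
    intro l j hlj
    rw [triple_entry]
    have inner := rectDiag_contract σB (fun i k => U l i * V j k)
      (fun t => u (l:ℕ) t * v (l:ℕ) t) ?_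
    · rw [inner]
    · intro i k hik
      have hln : (l:ℕ) < n := hlj ▸ j.isLt
      have hin : (i:ℕ) < n := hik ▸ k.isLt
      simp only [hu, hv]
      rw [dif_pos ⟨l.isLt, i.isLt⟩, dif_pos ⟨hln, hin⟩]
      have e1 : (⟨(l:ℕ), l.isLt⟩ : Fin m) = l := Fin.eta _ _
      have e2 : (⟨(i:ℕ), i.isLt⟩ : Fin m) = i := Fin.eta _ _
      have e3 : (⟨(l:ℕ), hln⟩ : Fin n) = j := Fin.val_inj.mp hlj
      have e4 : (⟨(i:ℕ), hin⟩ : Fin n) = k := Fin.val_inj.mp hik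
      rw [e1, e2, e3, e4]
  -- entry descriptions of u and v
  have hu' : ∀ (s t : ℕ) (hs : s < m) (ht : t < m), u s t = U ⟨s,hs⟩ ⟨t,ht⟩ := by
    intro s t hs ht; rw [hu]; simp only; rw [dif_pos ⟨hs, ht⟩]
  have hv' : ∀ (s t : ℕ) (hs : s < n) (ht : t < n), v s t = V ⟨s,hs⟩ ⟨t,ht⟩ := by
    intro s t hs ht; rw [hv]; simp only; rw [dif_pos ⟨hs, ht⟩]
  have hu'' : ∀ (s t : ℕ) (hs : s < m) (ht : t < m),
      (fun a b => u b a) s t = Uᵀ ⟨s,hs⟩ ⟨t,ht⟩ := by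
    intro s t hs ht; simp only [Matrix.transpose_apply]; exact hu' t s ht hs
  have hv'' : ∀ (s t : ℕ) (hs : s < n) (ht : t < n),
      (fun a b => v b a) s t = Vᵀ ⟨s,hs⟩ ⟨t,ht⟩ := by
    intro s t hs ht; simp only [Matrix.transpose_apply]; exact hv' t s ht hs
  have hUt : Uᵀ * Uᵀᵀ = 1 := by rw [Matrix.transpose_transpose]; exact hU1
  have hVt : Vᵀ * Vᵀᵀ = 1 := by rw [Matrix.transpose_transpose]; exact hV1
  -- apply the abstract inequality
  have main := abstract_vn N σA σB (fun s t => u s t * v s t) hσA0 hσB0 hσAdec hσBdec ?_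
  · rw [trace_eq]
    have conv : ∑ s ∈ Finset.range N, σA s * ∑ t ∈ Finset.range N, σB t * (u s t * v s t)
        = ∑ s ∈ Finset.range N, ∑ t ∈ Finset.range N, σA s * σB t * (u s t * v s t) := by
      apply Finset.sum_congr rfl
      intro s _
      rw [Finset.mul_sum]
      apply Finset.sum_congr rfl
      intro t _
      ring
    rw [conv]
    exact main
  · intro a b ha hb
    have ham : a ≤ m := le_trans ha (min_le_left _ _)
    have han : a ≤ n := le_trans ha (min_le_right _ _)
    have hbm : b ≤ m := le_trans hb (min_le_left _ _)
    have hbn : b ≤ n := le_trans hb (min_le_right _ _)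
    apply block_sum_le u v
    · intro j hj
      exact ortho_row_bound U hU2 u hu' j (lt_of_lt_of_le hj ham) b hbm
    · intro i hi
      exact ortho_row_bound Uᵀ hUt (fun a b => u b a) hu'' i (lt_of_lt_of_le hi hbm) a ham
    · intro j hj
      exact ortho_row_bound V hV2 v hv' j (lt_of_lt_of_le hj han) b hbn
    · intro i hi
      exact ortho_row_bound Vᵀ hVt (fun a b => v b a) hv'' i (lt_of_lt_of_le hi hbn) a han
end

section
/- Let Z ∈ ℝ^{r×r} be a matrix all of whose entries satisfy Σᵢ |zᵢⱼ| ≤ 1 for each column j and Σⱼ |zᵢⱼ| ≤ 1 for each row i, and let (aᵢ) and (bⱼ) be nonincreasing sequences of nonnegative reals. Then Σᵢⱼ zᵢⱼ aᵢ bⱼ ≤ Σᵢ aᵢ bᵢ. -/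
open BigOperators

private lemma tele_sum (A : ℕ → ℝ) : ∀ (n m : ℕ), m ≤ n →
    ∑ k ∈ Finset.range n, (if m ≤ k then (A k - A (k+1)) else 0) = A m - A n := by
  intro n
  induction n with
  | zero => intro m h; interval_cases m; simp
  | succ n ih =>
    intro m h
    rw [Finset.sum_range_succ]
    rcases Nat.lt_or_ge m (n+1) with h' | h'
    · have hm : m ≤ n := Nat.lt_succ_iff.mp h'
      rw [ih m hm, if_pos hm]; ring
    · have hm : m = n + 1 := le_antisymm h h'
      subst hm
      rw [if_neg (by omega), Finset.sum_eq_zero, add_zero, sub_self]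
      intro k hk
      rw [if_neg]
      have := Finset.mem_range.mp hk; omega

private lemma my_ite_prod (P Q : Prop) [Decidable P] [Decidable Q] (z x y : ℝ) :
    z * ((if P then x else 0) * (if Q then y else 0)) = (if P ∧ Q then z else 0) * (x * y) := by
  by_cases hP : P <;> by_cases hQ : Q <;> simp [hP, hQ] <;> ring

private lemma my_ite_prod' (P Q : Prop) [Decidable P] [Decidable Q] (x y : ℝ) :
    (if P then x else 0) * (if Q then y else 0) = (if P ∧ Q then (1:ℝ) else 0) * (x * y) := by
  by_cases hP : P <;> by_cases hQ : Q <;> simp [hP, hQ]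

theorem doubly_substochastic_bilinear_le {r : ℕ}
    (Z : Matrix (Fin r) (Fin r) ℝ) (a b : Fin r → ℝ)
    (hcol : ∀ j, ∑ i, |Z i j| ≤ 1) (hrow : ∀ i, ∑ j, |Z i j| ≤ 1)
    (ha0 : ∀ i, 0 ≤ a i) (hb0 : ∀ i, 0 ≤ b i)
    (ha : Antitone a) (hb : Antitone b) :
    ∑ i, ∑ j, Z i j * a i * b j ≤ ∑ i, a i * b i := by
  classical
  set A : ℕ → ℝ := fun i => if h : i < r then a ⟨i, h⟩ else 0 with hAdef
  set B : ℕ → ℝ := fun j => if h : j < r then b ⟨j, h⟩ else 0 with hBdef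
  have hα0 : ∀ k, 0 ≤ A k - A (k+1) := by
    intro k
    rw [sub_nonneg, hAdef]
    dsimp only
    split_ifs with h1 h2
    · exact ha (Fin.mk_le_mk.mpr (Nat.le_succ k))
    · omega
    · exact ha0 _
    · exact le_rfl
  have hβ0 : ∀ l, 0 ≤ B l - B (l+1) := by
    intro l
    rw [sub_nonneg, hBdef]
    dsimp only
    split_ifs with h1 h2
    · exact hb (Fin.mk_le_mk.mpr (Nat.le_succ l))
    · omega
    · exact hb0 _
    · exact le_rfl
  have keyA : ∀ i : Fin r, a i = ∑ k ∈ Finset.range r,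
      (if (i:ℕ) ≤ k then (A k - A (k+1)) else 0) := by
    intro i
    rw [tele_sum A r i i.2.le]
    have h2 : A r = 0 := by simp [hAdef]
    have h1 : A (i:ℕ) = a i := by simp [hAdef, i.2]
    rw [h1, h2, sub_zero]
  have keyB : ∀ j : Fin r, b j = ∑ l ∈ Finset.range r,
      (if (j:ℕ) ≤ l then (B l - B (l+1)) else 0) := by
    intro j
    rw [tele_sum B r j j.2.le]
    have h2 : B r = 0 := by simp [hBdef]
    have h1 : B (j:ℕ) = b j := by simp [hBdef, j.2]
    rw [h1, h2, sub_zero]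
  set KL := (Finset.range r) ×ˢ (Finset.range r) with hKL
  -- rewrite the LHS
  have stepL : ∀ i j : Fin r, Z i j * a i * b j = ∑ q ∈ KL,
      (if (i:ℕ) ≤ q.1 ∧ (j:ℕ) ≤ q.2 then Z i j else 0) *
        ((A q.1 - A (q.1+1)) * (B q.2 - B (q.2+1))) := by
    intro i j
    rw [hKL, Finset.sum_product, keyA i, keyB j, mul_assoc, Finset.sum_mul_sum,
      Finset.mul_sum]
    refine Finset.sum_congr rfl fun k _ => ?_
    rw [Finset.mul_sum]
    refine Finset.sum_congr rfl fun l _ => ?_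
    exact my_ite_prod _ _ _ _ _
  have stepR : ∀ i : Fin r, a i * b i = ∑ q ∈ KL,
      (if (i:ℕ) ≤ q.1 ∧ (i:ℕ) ≤ q.2 then (1:ℝ) else 0) *
        ((A q.1 - A (q.1+1)) * (B q.2 - B (q.2+1))) := by
    intro i
    rw [hKL, Finset.sum_product, keyA i, keyB i, Finset.sum_mul_sum]
    refine Finset.sum_congr rfl fun k _ => ?_
    refine Finset.sum_congr rfl fun l _ => ?_
    exact my_ite_prod' _ _ _ _
  have hL : ∑ i, ∑ j, Z i j * a i * b j = ∑ q ∈ KL, (∑ i : Fin r, ∑ j : Fin r,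
      (if (i:ℕ) ≤ q.1 ∧ (j:ℕ) ≤ q.2 then Z i j else 0)) *
        ((A q.1 - A (q.1+1)) * (B q.2 - B (q.2+1))) := by
    simp only [stepL]
    rw [show (∑ i : Fin r, ∑ j : Fin r, ∑ q ∈ KL,
        (if (i:ℕ) ≤ q.1 ∧ (j:ℕ) ≤ q.2 then Z i j else 0) *
          ((A q.1 - A (q.1+1)) * (B q.2 - B (q.2+1))))
        = ∑ i : Fin r, ∑ q ∈ KL, ∑ j : Fin r,
        (if (i:ℕ) ≤ q.1 ∧ (j:ℕ) ≤ q.2 then Z i j else 0) *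
          ((A q.1 - A (q.1+1)) * (B q.2 - B (q.2+1))) from
      Finset.sum_congr rfl fun i _ => Finset.sum_comm, Finset.sum_comm]
    refine Finset.sum_congr rfl fun q _ => ?_
    rw [Finset.sum_mul]
    refine Finset.sum_congr rfl fun i _ => ?_
    rw [Finset.sum_mul]
  have hR : ∑ i, a i * b i = ∑ q ∈ KL, (∑ i : Fin r,
      (if (i:ℕ) ≤ q.1 ∧ (i:ℕ) ≤ q.2 then (1:ℝ) else 0)) *
        ((A q.1 - A (q.1+1)) * (B q.2 - B (q.2+1))) := by
    simp only [stepR]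
    rw [Finset.sum_comm]
    refine Finset.sum_congr rfl fun q _ => ?_
    rw [Finset.sum_mul]
  rw [hL, hR]
  refine Finset.sum_le_sum fun q _ => ?_
  refine mul_le_mul_of_nonneg_right ?_ (mul_nonneg (hα0 _) (hβ0 _))
  -- the key combinatorial bound
  obtain ⟨k, l⟩ := q
  dsimp only
  rcases le_total k l with h | h
  · have hRc : (∑ i : Fin r, if (i:ℕ) ≤ k ∧ (i:ℕ) ≤ l then (1:ℝ) else 0)
        = ∑ i : Fin r, if (i:ℕ) ≤ k then (1:ℝ) else 0 := by
      refine Finset.sum_congr rfl fun i _ => ?_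
      by_cases hik : (i:ℕ) ≤ k
      · simp [hik, hik.trans h]
      · simp [hik]
    rw [hRc]
    refine Finset.sum_le_sum fun i _ => ?_
    by_cases hik : (i:ℕ) ≤ k
    · rw [if_pos hik]
      calc ∑ j : Fin r, (if (i:ℕ) ≤ k ∧ (j:ℕ) ≤ l then Z i j else 0)
          ≤ ∑ j : Fin r, |Z i j| := by
            refine Finset.sum_le_sum fun j _ => ?_
            split_ifs with h'
            · exact le_abs_self _
            · exact abs_nonneg _
        _ ≤ 1 := hrow i
    · simp [hik]
  · have hRc : (∑ i : Fin r, if (i:ℕ) ≤ k ∧ (i:ℕ) ≤ l then (1:ℝ) else 0)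
        = ∑ i : Fin r, if (i:ℕ) ≤ l then (1:ℝ) else 0 := by
      refine Finset.sum_congr rfl fun i _ => ?_
      by_cases hil : (i:ℕ) ≤ l
      · simp [hil, hil.trans h]
      · simp [hil]
    rw [hRc, Finset.sum_comm]
    refine Finset.sum_le_sum fun j _ => ?_
    by_cases hjl : (j:ℕ) ≤ l
    · rw [if_pos hjl]
      calc ∑ i : Fin r, (if (i:ℕ) ≤ k ∧ (j:ℕ) ≤ l then Z i j else 0)
          ≤ ∑ i : Fin r, |Z i j| := by
            refine Finset.sum_le_sum fun i _ => ?_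
            split_ifs with h'
            · exact le_abs_self _
            · exact abs_nonneg _
        _ ≤ 1 := hcol j
    · simp [hjl]
end
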